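/- Let E be a finite-dimensional real inner product space, ρ > 0, and u, w ∈ E. Consider G : E → ℝ defined by G(z) = ‖z‖ − ⟪u, z⟫ + (ρ/2)·‖w − z‖². If ‖ρ·w + u‖ ≤ 1, then z = 0 is the unique minimizer of G over E. If ‖ρ·w + u‖ > 1, then the unique minimizer of G over E is z = (1 − 1/‖ρ·w + u‖) • (w + ρ⁻¹ • u). -/

import Mathlib

open scoped InnerProductSpace

/-- Closed form of one row of the Z-update in the ADMM method for triangle lasso:
for `G z = ‖z‖ - ⟪u, z⟫ + (ρ/2) ‖w - z‖²`, if `‖ρ • w + u‖ ≤ 1` then `0` is the unique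
minimizer of `G`, and if `‖ρ • w + u‖ > 1` then `(1 - 1/‖ρ • w + u‖) • (w + ρ⁻¹ • u)`
is the unique minimizer of `G`. -/
theorem admm_z_update_closed_form
    {E : Type*} [NormedAddCommGroup E] [InnerProductSpace ℝ E] [FiniteDimensional ℝ E]
    (ρ : ℝ) (hρ : 0 < ρ) (u w : E) (G : E → ℝ)
    (hG : ∀ z : E, G z = ‖z‖ - ⟪u, z⟫_ℝ + ρ / 2 * ‖w - z‖ ^ 2) :
    (‖ρ • w + u‖ ≤ 1 → ∀ z : E, z ≠ 0 → G 0 < G z) ∧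
      (1 < ‖ρ • w + u‖ →
        ∀ z : E, z ≠ (1 - 1 / ‖ρ • w + u‖) • (w + ρ⁻¹ • u) →
          G ((1 - 1 / ‖ρ • w + u‖) • (w + ρ⁻¹ • u)) < G z) := by
  set v := ρ • w + u with hv
  have hK : ∀ z : E, G z = ‖z‖ - ⟪v, z⟫_ℝ + ρ/2 * ‖z‖^2 + ρ/2 * ‖w‖^2 := by
    intro z
    rw [hG, norm_sub_sq_real, hv, inner_add_left, real_inner_smul_left]
    ring
  constructor
  · intro hle z hz
    have hz' : 0 < ‖z‖ := norm_pos_iff.mpr hz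
    have hcs : ⟪v, z⟫_ℝ ≤ ‖v‖ * ‖z‖ := real_inner_le_norm v z
    have h1 : ‖v‖ * ‖z‖ ≤ ‖z‖ := by nlinarith
    have h0 : G 0 = ρ/2 * ‖w‖^2 := by simp [hK 0]
    rw [h0, hK z]
    have h2 : 0 < ρ/2 * ‖z‖^2 := by positivity
    linarith
  · intro hgt z hz
    have hv0 : (0:ℝ) < ‖v‖ := by linarith
    set t : ℝ := (‖v‖ - 1)/ρ with ht
    have htpos : 0 < t := div_pos (by linarith) hρ
    have hstar : (1 - 1/‖v‖) • (w + ρ⁻¹ • u) = (t/‖v‖) • v := by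
      have h1 : w + ρ⁻¹ • u = ρ⁻¹ • v := by
        rw [hv, smul_add, smul_smul, inv_mul_cancel₀ hρ.ne', one_smul]
      rw [h1, smul_smul]
      congr 1
      field_simp [ht]
      rw [ht]; field_simp
    rw [hstar] at hz ⊢
    have hnorm : ‖(t/‖v‖) • v‖ = t := by
      rw [norm_smul, Real.norm_eq_abs, abs_of_pos (div_pos htpos hv0)]
      field_simp
    have hinner : ⟪v, (t/‖v‖) • v⟫_ℝ = t * ‖v‖ := by
      rw [real_inner_smul_right, real_inner_self_eq_norm_sq]
      field_simp
    have hGstar : G ((t/‖v‖) • v) = t - t * ‖v‖ + ρ/2 * t^2 + ρ/2 * ‖w‖^2 := by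
      rw [hK, hnorm, hinner]
    have hcs : ⟪v, z⟫_ℝ ≤ ‖v‖ * ‖z‖ := real_inner_le_norm v z
    have hρt : ρ * t = ‖v‖ - 1 := by
      rw [ht]; field_simp
    rw [hGstar, hK z]
    rcases eq_or_ne ‖z‖ t with hzt | hzt
    · have hne : ⟪v, z⟫_ℝ ≠ ‖v‖ * ‖z‖ := by
        intro heq
        apply hz
        have h2 : ‖z‖ • v = ‖v‖ • z := (inner_eq_norm_mul_iff_real).mp heq
        have : z = (‖z‖ / ‖v‖) • v := by
          rw [div_eq_mul_inv, mul_comm, ← smul_smul, h2, smul_smul,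
            inv_mul_cancel₀ hv0.ne', one_smul]
        rw [this, hzt]
      have hlt : ⟪v, z⟫_ℝ < ‖v‖ * ‖z‖ := lt_of_le_of_ne hcs hne
      rw [hzt] at hlt ⊢
      nlinarith
    · have hsq : 0 < (‖z‖ - t)^2 :=
        lt_of_le_of_ne (sq_nonneg _) (Ne.symm (pow_ne_zero 2 (sub_ne_zero.mpr hzt)))
      nlinarith [mul_pos (half_pos hρ) hsq]
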